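/- Let R be a commutative ring, φ : R → R a ring endomorphism such that R is free of finite rank as a module over φ(R) via φ, with basis a_1,…,a_q, i.e. R = ⊕_{i=1}^q a_i·φ(R). Then φ : R → R, viewed as a ring map, is faithfully flat provided Spec R is connected. -/

import Mathlib

open TensorProduct

/-- Type synonym: `M` with the `R`-module structure twisted by `φ` (i.e. `r • m = φ r • m`).
For `M = R` this is "`R` viewed as an `R`-module via `φ`". -/
@[nolint unusedArguments]
def Twist (R : Type*) [CommRing R] (φ : R →+* R) (M : Type*) [AddCommGroup M] [Module R M] :
    Type _ := M

namespace Twist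

variable {R : Type*} [CommRing R] (φ : R →+* R) {M : Type*} [AddCommGroup M] [Module R M]

instance : AddCommGroup (Twist R φ M) := inferInstanceAs (AddCommGroup M)

instance : Module R (Twist R φ M) := Module.compHom M φ

theorem smul_def (r : R) (m : M) :
    (r • (show Twist R φ M from m)) = (show Twist R φ M from (φ r • m)) := rfl

end Twist

/-- The linearization `R ⊗_{φ,R} M → M`, `x ⊗ m ↦ x • φM m`, of a `φ`-semilinear map
`φM : M → M`.  It is `R`-linear when the left tensor factor and the target carry the
`φ`-twisted module structures.  An étale `φ`-module is a finite module `M` for which this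
map is bijective. -/
noncomputable def linearization {R : Type*} [CommRing R] (φ : R →+* R)
    {M : Type*} [AddCommGroup M] [Module R M] (φM : M →ₛₗ[φ] M) :
    TensorProduct R (Twist R φ R) M →ₗ[R] Twist R φ M :=
  TensorProduct.lift
    { toFun := fun x =>
        { toFun := fun m => show Twist R φ M from (show R from x) • φM m
          map_add' := fun a b => by
            show ((show R from x) • φM (a + b) : M) = (show R from x) • φM a + (show R from x) • φM b
            rw [map_add]
            exact smul_add (show R from x) (φM a) (φM b)
          map_smul' := fun r m => by
            show ((show R from x) • φM (r • m) : M) = φ r • ((show R from x) • φM m)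
            rw [LinearMap.map_smulₛₗ, smul_comm] }
      map_add' := fun x y => by
        ext m
        show ((show R from x) + (show R from y)) • φM m = (show R from x) • φM m + (show R from y) • φM m
        exact add_smul (show R from x) (show R from y) (φM m)
      map_smul' := fun r x => by
        ext m
        show (φ r * (show R from x)) • φM m = (φ r • ((show R from x) • φM m) : M)
        exact mul_smul (φ r) (show R from x) (φM m) }

/-- Let `R` be a commutative ring and `φ : R → R` an injective ring
endomorphism such that `R = ⊕_{i=1}^q a_i · φ(R)` is free of finite rank `q ≥ 1` over
`φ(R)` with basis `a₁, …, a_q`.  If `Spec R` is connected, then `φ` (i.e. the `R`-algebra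
`R` via `φ`, here `Twist R φ R`) is faithfully flat. -/
theorem statement_6 {R : Type*} [CommRing R] (φ : R →+* R)
    (hφinj : Function.Injective φ)
    (q : ℕ) (hq : 1 ≤ q) (a : Fin q → R)
    (hbasis : ∀ x : R, ∃! c : Fin q → R, x = ∑ i, a i * φ (c i))
    (hconn : ConnectedSpace (PrimeSpectrum R)) :
    Module.FaithfullyFlat R (Twist R φ R) := by
  -- `R` is nontrivial since `Spec R` is nonempty.
  have hRnt : Nontrivial R := by
    by_contra h
    have : Subsingleton R := not_nontrivial_iff_subsingleton.mp h
    exact (inferInstance : IsEmpty (PrimeSpectrum R)).false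
      hconn.toNonempty.some
  have hnt : Nontrivial (Twist R φ R) := hRnt
  -- `Twist R φ R` is a free `R`-module with basis `a`.
  let f : (Fin q → R) →ₗ[R] Twist R φ R :=
    { toFun := fun c => show Twist R φ R from ∑ i, a i * φ (c i)
      map_add' := fun c d => by
        show (∑ i, a i * φ (c i + d i) : R) = (∑ i, a i * φ (c i)) + ∑ i, a i * φ (d i)
        simp [map_add, mul_add, Finset.sum_add_distrib]
      map_smul' := fun r c => by
        show (∑ i, a i * φ (r * c i) : R) = φ r * ∑ i, a i * φ (c i)
        rw [Finset.mul_sum]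
        exact Finset.sum_congr rfl fun i _ => by rw [map_mul]; ring }
  have hbij : Function.Bijective f := by
    constructor
    · intro c d h
      exact (hbasis (∑ i, a i * φ (c i))).unique rfl h
    · intro x
      obtain ⟨c, hc, -⟩ := hbasis (show R from x)
      exact ⟨c, hc.symm⟩
  have : Module.Free R (Twist R φ R) :=
    Module.Free.of_equiv (LinearEquiv.ofBijective f hbij)
  infer_instance
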